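/- A point x₀ ∈ ℝⁿ is generic with respect to a locally finite arrangement A (in the sense of conditions (i) and (ii)) if and only if any two distinct flats of A have different distances from x₀. -/

import Mathlib

open Metric Set MeasureTheory

noncomputable section

/-- A locally finite arrangement of affine hyperplanes in ℝⁿ, given by affine
equations `⟪a i, x⟫ = b i` with `a i ≠ 0`, indexed injectively by `ι`. -/
structure Arrangement (n : ℕ) (ι : Type) where
  a : ι → EuclideanSpace ℝ (Fin n)
  b : ι → ℝ
  ha : ∀ i, a i ≠ 0
  inj : Function.Injective fun i => {x : EuclideanSpace ℝ (Fin n) | (inner ℝ (a i) x : ℝ) = b i}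
  locFin : ∀ x : EuclideanSpace ℝ (Fin n), ∃ ε > 0,
    {i : ι | ∃ y ∈ Metric.ball x ε, (inner ℝ (a i) y : ℝ) = b i}.Finite

namespace Arrangement

variable {n : ℕ} {ι : Type} (A : Arrangement n ι)

/-- The defining affine functional of the `i`-th hyperplane. -/
def val (i : ι) (x : EuclideanSpace ℝ (Fin n)) : ℝ := (inner ℝ (A.a i) x : ℝ) - A.b i

/-- The `i`-th hyperplane. -/
def hyperplane (i : ι) : Set (EuclideanSpace ℝ (Fin n)) := {x | A.val i x = 0}

/-- The sign vector of a point. -/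
def signAt (x : EuclideanSpace ℝ (Fin n)) : ι → SignType := fun i => SignType.sign (A.val i x)

/-- The (relatively open) stratum with sign vector `σ`. -/
def openCell (σ : ι → SignType) : Set (EuclideanSpace ℝ (Fin n)) :=
  {x | ∀ i, SignType.sign (A.val i x) = σ i}

/-- The (closed) faces of the arrangement: closures of the strata. -/
def IsFace (F : Set (EuclideanSpace ℝ (Fin n))) : Prop :=
  ∃ x : EuclideanSpace ℝ (Fin n), F = closure (A.openCell (A.signAt x))

/-- Chambers: closed faces of codimension 0. -/
def IsChamber (C : Set (EuclideanSpace ℝ (Fin n))) : Prop :=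
  ∃ x : EuclideanSpace ℝ (Fin n), (∀ i, A.val i x ≠ 0) ∧
    C = closure (A.openCell (A.signAt x))

/-- The support of a subset: the hyperplanes containing it. -/
def supp (U : Set (EuclideanSpace ℝ (Fin n))) : Set ι := {i | U ⊆ A.hyperplane i}

/-- The set of hyperplanes separating two chambers. -/
def sep (C C' : Set (EuclideanSpace ℝ (Fin n))) : Set ι :=
  {i | ∀ x ∈ interior C, ∀ y ∈ interior C', A.val i x * A.val i y < 0}

/-- `F` is a face of the chamber (or face) `C`. -/
def IsFaceOf (F C : Set (EuclideanSpace ℝ (Fin n))) : Prop := A.IsFace F ∧ F ⊆ C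

/-- `A.IsCF C F D` means `D = C.F`: `D` is the unique chamber containing `F` and not
separated from `C` by any hyperplane of `supp F`. -/
def IsCF (C F D : Set (EuclideanSpace ℝ (Fin n))) : Prop :=
  A.IsChamber D ∧ F ⊆ D ∧ A.sep C D ∩ A.supp F = ∅

/-- `A.IsOpp D F E` means `E = D^F`: `E` is the chamber opposite to `D` with respect to
its face `F`, i.e. the hyperplanes separating `D` and `E` are exactly those containing `F`. -/
def IsOpp (D F E : Set (EuclideanSpace ℝ (Fin n))) : Prop :=
  A.IsChamber E ∧ F ⊆ E ∧ A.sep D E = A.supp F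

/-- Flats: nonempty intersections of subfamilies of hyperplanes (including ℝⁿ itself). -/
def IsFlat (X : Set (EuclideanSpace ℝ (Fin n))) : Prop :=
  X.Nonempty ∧ ∃ s : Set ι, X = ⋂ i ∈ s, A.hyperplane i

/-- A cell `⟨C, F⟩` of the Salvetti complex: a chamber `C` together with a face `F` of `C`. -/
structure Cell {n : ℕ} {ι : Type} (𝒜 : Arrangement n ι) where
  C : Set (EuclideanSpace ℝ (Fin n))
  F : Set (EuclideanSpace ℝ (Fin n))
  isChamber : 𝒜.IsChamber C
  isFace : 𝒜.IsFace F
  faceLe : F ⊆ C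

/-- The Salvetti order: `⟨C,F⟩ ≤ ⟨D,G⟩` iff `F ⪯ G` (i.e. `F ⊇ G`) and `D.F = C`. -/
def cellLE (c d : A.Cell) : Prop := d.F ⊆ c.F ∧ A.IsCF d.C c.F c.C

/-- The subcomplex `S(C)`: cells `⟨D,F⟩` with `D = C.F`. -/
def inS (C : Set (EuclideanSpace ℝ (Fin n))) (c : A.Cell) : Prop := A.IsCF C c.F c.C

/-- A strict total order on the chambers. -/
def IsChamberOrder (lt : Set (EuclideanSpace ℝ (Fin n)) → Set (EuclideanSpace ℝ (Fin n)) → Prop) :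
    Prop :=
  (∀ C C', A.IsChamber C → A.IsChamber C' → C ≠ C' → lt C C' ∨ lt C' C) ∧
  (∀ C, ¬ lt C C) ∧
  (∀ C C' C'', lt C C' → lt C' C'' → lt C C'')

/-- The upper ideal `J(C)` of the poset of flats determined by a total order on chambers. -/
def J (lt : Set (EuclideanSpace ℝ (Fin n)) → Set (EuclideanSpace ℝ (Fin n)) → Prop)
    (C : Set (EuclideanSpace ℝ (Fin n))) : Set (Set (EuclideanSpace ℝ (Fin n))) :=
  {X | A.IsFlat X ∧ ∀ C', A.IsChamber C' → lt C' C → (A.supp X ∩ A.sep C C').Nonempty}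

/-- A valid order: for each chamber `C`, the ideal `J(C)` is the principal upper ideal
(in the poset of flats ordered by reverse inclusion) generated by `X_C = |F_C|` for some
face `F_C` of `C`. -/
def IsValidOrder
    (lt : Set (EuclideanSpace ℝ (Fin n)) → Set (EuclideanSpace ℝ (Fin n)) → Prop) : Prop :=
  A.IsChamberOrder lt ∧
  ∀ C, A.IsChamber C → ∃ F_C, A.IsFaceOf F_C C ∧
    A.J lt C = {X | A.IsFlat X ∧ X ⊆ (affineSpan ℝ F_C : Set (EuclideanSpace ℝ (Fin n)))}

/-- Membership in `N(C)`: cells of `S(C)` not lying in any earlier `S(C')`. -/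
def inN (lt : Set (EuclideanSpace ℝ (Fin n)) → Set (EuclideanSpace ℝ (Fin n)) → Prop)
    (C : Set (EuclideanSpace ℝ (Fin n))) (c : A.Cell) : Prop :=
  A.inS C c ∧ ∀ C', A.IsChamber C' → lt C' C → ¬ A.inS C' c

/-- A point `x₀` is generic with respect to `A`: (i) chambers at equal distance from `x₀`
have the same metric projection of `x₀`, lying in their intersection; (ii) distances to
strictly comparable flats are strictly comparable. -/
def IsGeneric (x₀ : EuclideanSpace ℝ (Fin n)) : Prop :=
  (∀ C C', A.IsChamber C → A.IsChamber C' → infDist x₀ C = infDist x₀ C' →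
    ∀ p ∈ C, ∀ p' ∈ C', (∀ q ∈ C, dist x₀ p ≤ dist x₀ q) →
      (∀ q ∈ C', dist x₀ p' ≤ dist x₀ q) → p = p' ∧ p ∈ C ∩ C') ∧
  (∀ L L', A.IsFlat L → A.IsFlat L' → L' ⊂ L → infDist x₀ L < infDist x₀ L')

end Arrangement


section AuxConvex

variable {F : Type*} [NormedAddCommGroup F] [InnerProductSpace ℝ F]

local notation "⟪" x ", " y "⟫" => @inner ℝ _ _ x y

/-- Variational inequality for the minimal-norm point of a convex set. -/
lemma min_norm_inner {D : Set F} (hD : Convex ℝ D) {z q : F} (hz : z ∈ D)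
    (hmin : ∀ y ∈ D, ‖z‖ ≤ ‖y‖) (hq : q ∈ D) : ‖z‖ ^ 2 ≤ ⟪z, q⟫ := by
  have key : 0 ≤ ⟪z, q - z⟫ := by
    by_contra hneg
    push_neg at hneg
    set r : ℝ := -⟪z, q - z⟫ with hr
    have hr0 : 0 < r := by rw [hr]; linarith
    have hqz : q - z ≠ 0 := by
      intro h
      rw [h, inner_zero_right] at hneg; linarith
    have hd0 : 0 < ‖q - z‖ ^ 2 := pow_pos (norm_pos_iff.mpr hqz) 2
    set t : ℝ := min 1 (r / ‖q - z‖ ^ 2) with ht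
    have ht0 : 0 < t := lt_min one_pos (by positivity)
    have ht1 : t ≤ 1 := min_le_left _ _
    have htd : t * ‖q - z‖ ^ 2 ≤ r := by
      rcases min_cases 1 (r / ‖q - z‖ ^ 2) with ⟨h1, h2⟩ | ⟨h1, h2⟩
      · rw [ht, h1, one_mul]
        rw [le_div_iff₀ hd0] at h2; linarith
      · rw [ht, h1, div_mul_cancel₀ _ (ne_of_gt hd0)]
    have hy : z + t • (q - z) ∈ D := by
      have := hD hz hq (by linarith : (0:ℝ) ≤ 1 - t) (le_of_lt ht0) (by ring)
      convert this using 1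
      module
    have hle := hmin _ hy
    have hsq : ‖z‖ ^ 2 ≤ ‖z + t • (q - z)‖ ^ 2 := by
      have := norm_nonneg z
      nlinarith [norm_nonneg (z + t • (q - z))]
    rw [norm_add_sq_real, inner_smul_right, norm_smul, Real.norm_eq_abs,
      abs_of_pos ht0] at hsq
    have hQ : ⟪z, q - z⟫ = -r := by rw [hr]; ring
    rw [hQ, mul_pow] at hsq
    nlinarith [mul_le_mul_of_nonneg_left htd (le_of_lt ht0)]
  have h2 : ⟪z, q - z⟫ = ⟪z, q⟫ - ⟪z, z⟫ := inner_sub_right z q z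
  have h3 := real_inner_self_eq_norm_sq z
  nlinarith

/-- Gordan's theorem. -/
lemma gordan {κ : Type*} [Fintype κ] (b : κ → F) :
    (∃ v : F, ∀ i, 0 < ⟪b i, v⟫) ∨
    (∃ μ : κ → ℝ, (∀ i, 0 ≤ μ i) ∧ ∑ i, μ i = 1 ∧ ∑ i, μ i • b i = 0) := by
  cases isEmpty_or_nonempty κ with
  | inl h => exact Or.inl ⟨0, fun i => (h.false i).elim⟩
  | inr hne =>
    classical
    set T : (κ → ℝ) → F := fun μ => ∑ i, μ i • b i with hT
    have hTcont : Continuous T :=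
      continuous_finset_sum _ fun i _ => (continuous_apply i).smul continuous_const
    set D : Set F := T '' stdSimplex ℝ κ with hD
    have hDconv : Convex ℝ D := by
      rintro x ⟨μ, hμ, rfl⟩ y ⟨ν, hν, rfl⟩ s t hs ht hst
      refine ⟨fun i => s * μ i + t * ν i, ⟨fun i =>
        add_nonneg (mul_nonneg hs (hμ.1 i)) (mul_nonneg ht (hν.1 i)), ?_⟩, ?_⟩
      · rw [Finset.sum_add_distrib, ← Finset.mul_sum, ← Finset.mul_sum, hμ.2, hν.2]
        linarith
      · show ∑ i, (s * μ i + t * ν i) • b i = s • T μ + t • T ν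
        simp only [hT, add_smul, mul_smul, Finset.sum_add_distrib, Finset.smul_sum]
    have singmem : ∀ i₀ : κ, (fun j => if j = i₀ then (1:ℝ) else 0) ∈ stdSimplex ℝ κ :=
      fun i₀ => ⟨fun j => by dsimp only; split <;> norm_num, by simp⟩
    have hDcp : IsCompact D := (isCompact_stdSimplex ℝ κ).image hTcont
    have hDne : D.Nonempty := by
      obtain ⟨i₀⟩ := hne
      exact ⟨T _, ⟨_, singmem i₀, rfl⟩⟩
    obtain ⟨z, hzD, hzmin⟩ := hDcp.exists_isMinOn hDne continuous_norm.continuousOn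
    by_cases hz0 : z = 0
    · right
      obtain ⟨μ, hμ, hμz⟩ := hzD
      exact ⟨μ, hμ.1, hμ.2, by rw [show (∑ i, μ i • b i) = T μ from rfl, hμz, hz0]⟩
    · left
      refine ⟨z, fun i => ?_⟩
      have hbD : b i ∈ D := by
        refine ⟨fun j => if j = i then 1 else 0, singmem i, ?_⟩
        show ∑ j, (if j = i then (1:ℝ) else 0) • b j = b i
        simp [ite_smul]
      have hmn := min_norm_inner hDconv hzD (fun y hy => hzmin hy) hbD
      have hz2 : 0 < ‖z‖ ^ 2 := pow_pos (norm_pos_iff.mpr hz0) 2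
      calc (0:ℝ) < ‖z‖ ^ 2 := hz2
        _ ≤ ⟪z, b i⟫ := hmn
        _ = ⟪b i, z⟫ := real_inner_comm _ _

/-- There is a vector not orthogonal to any of finitely many nonzero vectors. -/
lemma exists_inner_ne_zero {ι : Type*} (s : Finset ι) (a : ι → F)
    (ha : ∀ i ∈ s, a i ≠ 0) : ∃ g : F, ∀ i ∈ s, ⟪a i, g⟫ ≠ 0 := by
  classical
  induction s using Finset.induction_on with
  | empty => exact ⟨0, by simp⟩
  | @insert j s hj ih =>
    obtain ⟨g, hg⟩ := ih (fun i hi => ha i (Finset.mem_insert_of_mem hi))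
    have haj : a j ≠ 0 := ha j (Finset.mem_insert_self j s)
    set B : Finset ℝ := (insert j s).image (fun i => -⟪a i, g⟫ / ⟪a i, a j⟫) with hB
    obtain ⟨ε, hε⟩ := (insert 0 B).exists_notMem
    refine ⟨g + ε • a j, fun i hi => ?_⟩
    rw [inner_add_right, real_inner_smul_right]
    intro hcon
    by_cases hij : ⟪a i, a j⟫ = 0
    · rcases Finset.mem_insert.mp hi with rfl | hi'
      · exact haj (inner_self_eq_zero.mp hij)
      · rw [hij, mul_zero, add_zero] at hcon
        exact hg i hi' hcon
    · have : ε = -⟪a i, g⟫ / ⟪a i, a j⟫ := by field_simp; linarith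
      exact hε (Finset.mem_insert_of_mem (Finset.mem_image.mpr ⟨i, hi, this.symm⟩))

/-- Existence of an ℓ¹-minimal representation. -/
lemma exists_l1_min {κ : Type*} [Fintype κ] (a : κ → F) (w : F)
    (hw : ∃ c : κ → ℝ, ∑ i, c i • a i = w) :
    ∃ c : κ → ℝ, (∑ i, c i • a i = w) ∧
      ∀ c' : κ → ℝ, (∑ i, c' i • a i = w) → ∑ i, |c i| ≤ ∑ i, |c' i| := by
  classical
  obtain ⟨c₀, hc₀⟩ := hw
  set T : (κ → ℝ) → F := fun c => ∑ i, c i • a i with hT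
  have hTcont : Continuous T :=
    continuous_finset_sum _ fun i _ => (continuous_apply i).smul continuous_const
  set N : (κ → ℝ) → ℝ := fun c => ∑ i, |c i| with hN
  have hNcont : Continuous N :=
    continuous_finset_sum _ fun i _ => (continuous_apply i).abs
  set K : Set (κ → ℝ) := T ⁻¹' {w} ∩ {c | N c ≤ N c₀} with hK
  have hKcl : IsClosed K :=
    (isClosed_singleton.preimage hTcont).inter (isClosed_le hNcont continuous_const)
  have hKbd : Bornology.IsBounded K := by
    rw [Metric.isBounded_iff_subset_closedBall 0]
    refine ⟨N c₀, fun c hc => ?_⟩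
    have hNc : N c ≤ N c₀ := hc.2
    have h0 : (0:ℝ) ≤ N c₀ := le_trans (by positivity) hNc
    rw [mem_closedBall, dist_zero_right]
    rw [pi_norm_le_iff_of_nonneg h0]
    intro i
    rw [Real.norm_eq_abs]
    calc |c i| ≤ N c := Finset.single_le_sum (f := fun i => |c i|)
          (fun i _ => abs_nonneg _) (Finset.mem_univ i)
      _ ≤ N c₀ := hNc
  have hKcp : IsCompact K := isCompact_of_isClosed_isBounded hKcl hKbd
  have hKne : K.Nonempty := ⟨c₀, ⟨by simp [hK, hT, hc₀], show N c₀ ≤ N c₀ from le_rfl⟩⟩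
  obtain ⟨c, hcK, hcmin⟩ := hKcp.exists_isMinOn hKne hNcont.continuousOn
  refine ⟨c, hcK.1, fun c' hc' => ?_⟩
  by_cases h : N c' ≤ N c₀
  · exact hcmin (⟨hc', h⟩ : c' ∈ K)
  · push_neg at h
    calc N c ≤ N c₀ := hcK.2
      _ ≤ N c' := le_of_lt h

lemma exists_signed_rep {κ : Type*} [Fintype κ] (a : κ → F) (ha : ∀ i, a i ≠ 0)
    (w : F) (hw : w ∈ Submodule.span ℝ (Set.range a)) :
    ∃ (v : F) (μ : κ → ℝ), (∀ i, ⟪a i, v⟫ ≠ 0) ∧ (∀ i, 0 ≤ μ i * ⟪a i, v⟫) ∧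
      w = ∑ i, μ i • a i := by
  classical
  obtain ⟨c, hc, hcmin⟩ := exists_l1_min a w
    (by obtain ⟨c₀, h⟩ := (Submodule.mem_span_range_iff_exists_fun ℝ).mp hw; exact ⟨c₀, h⟩)
  set s : κ → ℝ := fun i => if 0 < c i then 1 else -1 with hs
  have hsc : ∀ i, c i ≠ 0 → s i * c i = |c i| := by
    intro i hi
    rcases hi.lt_or_gt with h | h
    · rw [hs]; simp only [if_neg (not_lt.mpr (le_of_lt h))]
      rw [abs_of_neg h]; ring
    · rw [hs]; simp only [if_pos h]
      rw [abs_of_pos h]; ring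
  have hs1 : ∀ i, s i = 1 ∨ s i = -1 := by
    intro i; rw [hs]; dsimp only; split
    · exact Or.inl rfl
    · exact Or.inr rfl
  have hss : ∀ i, s i * s i = 1 := by
    intro i; rcases hs1 i with h | h <;> rw [h] <;> norm_num
  rcases gordan (κ := {i : κ // c i ≠ 0}) (fun i => s i.1 • a i.1) with
    ⟨v₀, hv₀⟩ | ⟨μ, hμ0, hμ1, hμ2⟩
  · -- feasible case: perturb v₀ to make all inner products nonzero
    obtain ⟨g, hg'⟩ := exists_inner_ne_zero Finset.univ a (fun i _ => ha i)
    have hg : ∀ i, ⟪a i, g⟫ ≠ 0 := fun i => hg' i (Finset.mem_univ i)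
    have hev : ∀ᶠ ε in nhds (0:ℝ), ∀ i : {i : κ // c i ≠ 0},
        0 < s i.1 * (⟪a i.1, v₀⟫ + ε * ⟪a i.1, g⟫) := by
      rw [Filter.eventually_all]
      intro i
      have hcont : Continuous fun ε : ℝ => s i.1 * (⟪a i.1, v₀⟫ + ε * ⟪a i.1, g⟫) :=
        continuous_const.mul (continuous_const.add (continuous_id.mul continuous_const))
      have h0 : 0 < s i.1 * (⟪a i.1, v₀⟫ + 0 * ⟪a i.1, g⟫) := by
        have := hv₀ i
        rw [real_inner_smul_left] at this
        simpa using this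
      have hopen : IsOpen {y : ℝ | 0 < y} := isOpen_lt continuous_const continuous_id
      exact hcont.continuousAt.eventually_mem (hopen.mem_nhds h0)
    obtain ⟨η, hη0, hη⟩ := Metric.eventually_nhds_iff.mp hev
    set B : Finset ℝ := Finset.univ.image (fun i : κ => -⟪a i, v₀⟫ / ⟪a i, g⟫) with hB
    have hIinf : (Ioo (0:ℝ) (η/2)).Infinite :=
      Set.infinite_coe_iff.mp (Set.Ioo.infinite (half_pos hη0))
    obtain ⟨ε, hεI, hεB⟩ := hIinf.exists_notMem_finset B
    have hε0 : 0 < ε := hεI.1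
    have hεη : dist ε 0 < η := by
      rw [Real.dist_eq, sub_zero, abs_of_pos hε0]
      linarith [hεI.2]
    set v : F := v₀ + ε • g with hv
    have hiv : ∀ i, ⟪a i, v⟫ = ⟪a i, v₀⟫ + ε * ⟪a i, g⟫ := by
      intro i; rw [hv, inner_add_right, real_inner_smul_right]
    have hvne : ∀ i, ⟪a i, v⟫ ≠ 0 := by
      intro i hcon
      rw [hiv i] at hcon
      apply hεB
      rw [hB]
      refine Finset.mem_image.mpr ⟨i, Finset.mem_univ i, ?_⟩
      rw [div_eq_iff (hg i)]
      linarith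
    refine ⟨v, c, hvne, fun i => ?_, hc.symm⟩
    by_cases hci : c i = 0
    · rw [hci, zero_mul]
    · have hpos := hη hεη ⟨i, hci⟩
      rw [← hiv i] at hpos
      have h1 := hsc i hci
      have h2 := hss i
      have h3 : |c i| * s i = c i := by
        calc |c i| * s i = s i * c i * s i := by rw [h1]
          _ = c i * (s i * s i) := by ring
          _ = c i := by rw [h2, mul_one]
      have h4 : c i * ⟪a i, v⟫ = |c i| * (s i * ⟪a i, v⟫) := by
        calc c i * ⟪a i, v⟫ = |c i| * s i * ⟪a i, v⟫ := by rw [h3]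
          _ = |c i| * (s i * ⟪a i, v⟫) := by ring
      rw [h4]
      positivity
  · -- infeasible case: contradicts ℓ¹-minimality
    exfalso
    have hne : Nonempty {i : κ // c i ≠ 0} := by
      by_contra h
      rw [not_nonempty_iff] at h
      rw [Finset.univ_eq_empty, Finset.sum_empty] at hμ1
      norm_num at hμ1
    set ε : ℝ := Finset.univ.inf' (Finset.univ_nonempty) (fun i : {i : κ // c i ≠ 0} => |c i.1|)
      with hεdef
    have hε0 : 0 < ε := by
      rw [hεdef, Finset.lt_inf'_iff]
      intro i _
      exact abs_pos.mpr i.2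
    have hεle : ∀ i : {i : κ // c i ≠ 0}, ε ≤ |c i.1| := by
      intro i
      exact Finset.inf'_le _ (Finset.mem_univ i)
    have hμle1 : ∀ i : {i : κ // c i ≠ 0}, μ i ≤ 1 := by
      intro i
      rw [← hμ1]
      exact Finset.single_le_sum (fun j _ => hμ0 j) (Finset.mem_univ i)
    set d : κ → ℝ := fun j => if h : c j ≠ 0 then ε * μ ⟨j, h⟩ * s j else 0 with hd
    set c' : κ → ℝ := fun j => c j - d j with hc'
    -- converting sums over κ to sums over the support subtype
    have hconv : ∀ f : κ → F, (∀ j, c j = 0 → f j = 0) →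
        ∑ j, f j = ∑ i : {i : κ // c i ≠ 0}, f i.1 := by
      intro f hf
      rw [← Finset.sum_filter_of_ne (p := fun j => c j ≠ 0)
        (fun x _ hx hcx => hx (hf x hcx))]
      exact Finset.sum_subtype _ (fun x => by simp) f
    have hconvR : ∀ f : κ → ℝ, (∀ j, c j = 0 → f j = 0) →
        ∑ j, f j = ∑ i : {i : κ // c i ≠ 0}, f i.1 := by
      intro f hf
      rw [← Finset.sum_filter_of_ne (p := fun j => c j ≠ 0)
        (fun x _ hx hcx => hx (hf x hcx))]
      exact Finset.sum_subtype _ (fun x => by simp) f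
    have hdsum : ∑ j, d j • a j = 0 := by
      rw [hconv (fun j => d j • a j) (fun j hj => by
        rw [hd]; dsimp only; rw [dif_neg (by simpa using hj), zero_smul])]
      have : ∀ i : {i : κ // c i ≠ 0}, d i.1 • a i.1 = ε • (μ i • (s i.1 • a i.1)) := by
        intro i
        rw [hd]; dsimp only; rw [dif_pos i.2, smul_smul, smul_smul, mul_assoc]
      rw [Finset.sum_congr rfl (fun i _ => this i), ← Finset.smul_sum, hμ2, smul_zero]
    have hc'sum : ∑ j, c' j • a j = w := by
      have : ∑ j, c' j • a j = ∑ j, c j • a j - ∑ j, d j • a j := by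
        rw [← Finset.sum_sub_distrib]
        exact Finset.sum_congr rfl (fun j _ => by rw [hc']; dsimp only; rw [sub_smul])
      rw [this, hdsum, sub_zero, hc]
    have habs : ∀ j, |c' j| = |c j| - (if h : c j ≠ 0 then ε * μ ⟨j, h⟩ else 0) := by
      intro j
      by_cases hj : c j ≠ 0
      · have hεμ0 : 0 ≤ ε * μ ⟨j, hj⟩ := mul_nonneg (le_of_lt hε0) (hμ0 ⟨j, hj⟩)
        have hεμle : ε * μ ⟨j, hj⟩ ≤ |c j| := by
          calc ε * μ ⟨j, hj⟩ ≤ ε * 1 := mul_le_mul_of_nonneg_left (hμle1 ⟨j, hj⟩) (le_of_lt hε0)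
            _ = ε := mul_one ε
            _ ≤ |c j| := hεle ⟨j, hj⟩
        have hscj := hsc j hj
        rw [hc']
        dsimp only
        rw [hd]
        dsimp only
        rw [dif_pos hj, dif_pos hj]
        rcases hs1 j with hsj | hsj
        · rw [hsj] at hscj
          rw [one_mul] at hscj
          rw [hsj, mul_one]
          rw [abs_of_nonneg (by linarith)]
          linarith
        · rw [hsj] at hscj
          rw [neg_one_mul] at hscj
          rw [hsj]
          rw [show c j - ε * μ ⟨j, hj⟩ * (-1) = c j + ε * μ ⟨j, hj⟩ by ring]
          rw [abs_of_nonpos (by linarith)]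
          linarith
      · push_neg at hj
        rw [hc']
        dsimp only
        rw [hd]
        dsimp only
        rw [dif_neg (by simpa using hj), dif_neg (by simpa using hj), hj]
        norm_num
    have hesum : ∑ j, (if h : c j ≠ 0 then ε * μ ⟨j, h⟩ else 0) = ε := by
      rw [hconvR (fun j => if h : c j ≠ 0 then ε * μ ⟨j, h⟩ else 0)
        (fun j hj => by rw [dif_neg (by simpa using hj)])]
      have : ∀ i : {i : κ // c i ≠ 0},
          (if h : c i.1 ≠ 0 then ε * μ ⟨i.1, h⟩ else 0) = ε * μ i := by
        intro i
        rw [dif_pos i.2]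
      rw [Finset.sum_congr rfl (fun i _ => this i), ← Finset.mul_sum, hμ1, mul_one]
    have hlt : ∑ j, |c' j| < ∑ j, |c j| := by
      have : ∑ j, |c' j| = ∑ j, |c j| - ε := by
        rw [Finset.sum_congr rfl (fun j _ => habs j), Finset.sum_sub_distrib, hesum]
      rw [this]
      linarith
    exact absurd (hcmin c' hc'sum) (not_le.mpr hlt)

end AuxConvex

namespace Arrangement

variable {n : ℕ} {ι : Type} (A : Arrangement n ι)

local notation "E" => EuclideanSpace ℝ (Fin n)
local notation "⟪" x ", " y "⟫" => @inner ℝ _ _ x y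

lemma val_continuous (i : ι) : Continuous (A.val i) :=
  (continuous_const.inner continuous_id).sub continuous_const

lemma val_sub (i : ι) (x y : E) : A.val i x - A.val i y = ⟪A.a i, x - y⟫ := by
  simp only [val, inner_sub_right]
  ring

lemma val_add_smul (i : ι) (x v : E) (t : ℝ) :
    A.val i (x + t • v) = A.val i x + t * ⟪A.a i, v⟫ := by
  simp only [val, inner_add_right, real_inner_smul_right]
  ring

lemma val_zero_iff (i : ι) (x : E) : A.val i x = 0 ↔ (⟪A.a i, x⟫ = A.b i) :=
  sub_eq_zero

/-- Helper: sign equality from positive product. -/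
lemma sign_eq_of_mul_pos {x y : ℝ} (h : 0 < x * y) : SignType.sign x = SignType.sign y := by
  rcases mul_pos_iff.mp h with ⟨h1, h2⟩ | ⟨h1, h2⟩
  · rw [sign_pos h1, sign_pos h2]
  · rw [sign_neg h1, sign_neg h2]

lemma mul_pos_of_sign_eq {x y : ℝ} (hy : y ≠ 0) (h : SignType.sign x = SignType.sign y) :
    0 < x * y := by
  rcases hy.lt_or_gt with h1 | h1
  · rw [sign_neg h1] at h
    have hx : x < 0 := by
      rcases lt_trichotomy x 0 with h2 | h2 | h2
      · exact h2
      · rw [h2, sign_zero] at h; exact absurd h (by decide)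
      · rw [sign_pos h2] at h; exact absurd h (by decide)
    exact mul_pos_of_neg_of_neg hx h1
  · rw [sign_pos h1] at h
    have hx : 0 < x := by
      rcases lt_trichotomy x 0 with h2 | h2 | h2
      · rw [sign_neg h2] at h; exact absurd h (by decide)
      · rw [h2, sign_zero] at h; exact absurd h (by decide)
      · exact h2
    exact mul_pos hx h1

/-- In a small enough ball around `p`, every hyperplane not containing `p`
has constant (nonzero) sign. -/
lemma exists_delta (p : E) :
    ∃ δ > 0, ({i | A.val i p = 0}.Finite ∧
      ∀ i, A.val i p ≠ 0 → ∀ y ∈ ball p δ, 0 < A.val i y * A.val i p) := by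
  classical
  obtain ⟨ε, hε0, hfin⟩ := A.locFin p
  have hTiff : ∀ i, (i ∈ {i : ι | ∃ y ∈ Metric.ball p ε, (⟪A.a i, y⟫ = A.b i)}) ↔
      ∃ y ∈ ball p ε, A.val i y = 0 := by
    intro i
    simp only [mem_setOf_eq, val_zero_iff]
  have hSfin : {i | A.val i p = 0}.Finite := by
    refine hfin.subset (fun i hi => ?_)
    exact (hTiff i).mpr ⟨p, mem_ball_self hε0, hi⟩
  set F : Finset ι := hfin.toFinset.filter (fun i => A.val i p ≠ 0) with hF
  set U : Set E := ⋂ i ∈ F, {y | 0 < A.val i y * A.val i p} with hU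
  have hUopen : IsOpen U := isOpen_biInter_finset (fun i _ =>
    isOpen_lt continuous_const ((A.val_continuous i).mul continuous_const))
  have hpU : p ∈ U := by
    rw [hU]
    refine mem_iInter₂.mpr (fun i hi => ?_)
    have : A.val i p ≠ 0 := (Finset.mem_filter.mp hi).2
    exact mul_pos_of_sign_eq this rfl
  obtain ⟨δ', hδ'0, hδ'⟩ := Metric.isOpen_iff.mp hUopen p hpU
  refine ⟨min ε δ', lt_min hε0 hδ'0, hSfin, fun i hip y hy => ?_⟩
  by_cases hiT : ∃ z ∈ ball p ε, A.val i z = 0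
  · have hiF : i ∈ F := Finset.mem_filter.mpr
      ⟨hfin.mem_toFinset.mpr ((hTiff i).mpr hiT), hip⟩
    have : y ∈ U := hδ' (lt_of_lt_of_le (mem_ball.mp hy) (min_le_right _ _))
    exact mem_iInter₂.mp this i hiF
  · -- no zero of `val i` in the ball: same sign by the segment argument
    push_neg at hiT
    have hyball : y ∈ ball p ε := mem_ball.mpr (lt_of_lt_of_le (mem_ball.mp hy) (min_le_left _ _))
    have hyne : A.val i y ≠ 0 := hiT y hyball
    by_contra hcon
    push_neg at hcon
    have hne : A.val i y * A.val i p ≠ 0 := mul_ne_zero hyne hip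
    have hneg : A.val i y * A.val i p < 0 := lt_of_le_of_ne hcon hne
    set u : ℝ := A.val i y with hu
    set w : ℝ := A.val i p with hw
    have huw : u - w ≠ 0 := by
      intro h
      have : u = w := by linarith
      rw [this] at hneg
      nlinarith
    set t : ℝ := u / (u - w) with ht
    have ht0 : 0 ≤ t := by
      rcases mul_neg_iff.mp hneg with ⟨h1, h2⟩ | ⟨h1, h2⟩
      · exact div_nonneg (le_of_lt h1) (by linarith)
      · rw [ht]
        exact le_of_lt (div_pos_of_neg_of_neg h1 (by linarith))
    have ht1 : t ≤ 1 := by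
      rcases mul_neg_iff.mp hneg with ⟨h1, h2⟩ | ⟨h1, h2⟩
      · rw [ht, div_le_one (by linarith)]; linarith
      · rw [ht, div_le_one_iff]
        exact Or.inr (Or.inr ⟨by linarith, by linarith⟩)
    set z : E := y + t • (p - y) with hz
    have hzval : A.val i z = 0 := by
      rw [hz, val_add_smul]
      have : (⟪A.a i, p - y⟫ : ℝ) = w - u := by
        rw [← val_sub]
      rw [this, ht]
      field_simp
      rw [← hu]
      ring
    have hzball : z ∈ ball p ε := by
      have hcomb : z = (1 - t) • y + t • p := by
        rw [hz]; module
      rw [hcomb]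
      exact (convex_ball p ε) hyball (mem_ball_self hε0) (by linarith) ht0 (by ring)
    exact hiT z hzball hzval

/-- Points on the small segment from `p` in direction `v` lie in a common open cell,
and the resulting chamber contains `p` and lies (relative to the hyperplanes through `p`)
on the side indicated by `v`. -/
lemma exists_chamber (p v : E) (hv : ∀ i, A.val i p = 0 → (⟪A.a i, v⟫ : ℝ) ≠ 0) :
    ∃ C, A.IsChamber C ∧ p ∈ C ∧
      ∀ q ∈ C, ∀ i, A.val i p = 0 → 0 ≤ (⟪A.a i, v⟫ : ℝ) * ⟪A.a i, q - p⟫ := by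
  obtain ⟨δ, hδ0, hSfin, hδ⟩ := A.exists_delta p
  set t₀ : ℝ := δ / (2 * (‖v‖ + 1)) with ht₀
  have hvpos : 0 < ‖v‖ + 1 := by positivity
  have ht₀0 : 0 < t₀ := by positivity
  have hmem : ∀ t : ℝ, 0 < t → t ≤ t₀ → p + t • v ∈ ball p δ := by
    intro t htp htt
    rw [mem_ball, dist_eq_norm]
    have : p + t • v - p = t • v := by abel
    rw [this, norm_smul, Real.norm_eq_abs, abs_of_pos htp]
    calc t * ‖v‖ ≤ t₀ * ‖v‖ := mul_le_mul_of_nonneg_right htt (norm_nonneg v)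
      _ < t₀ * (2 * (‖v‖ + 1)) := by
          apply mul_lt_mul_of_pos_left _ ht₀0
          nlinarith [norm_nonneg v]
      _ = δ := by rw [ht₀]; field_simp
  have hsgn : ∀ t : ℝ, 0 < t → t ≤ t₀ → ∀ i,
      A.signAt (p + t • v) i = A.signAt (p + t₀ • v) i ∧ A.val i (p + t • v) ≠ 0 := by
    intro t htp htt i
    by_cases hip : A.val i p = 0
    · have h1 : A.val i (p + t • v) = t * ⟪A.a i, v⟫ := by
        rw [val_add_smul, hip, zero_add]
      have h2 : A.val i (p + t₀ • v) = t₀ * ⟪A.a i, v⟫ := by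
        rw [val_add_smul, hip, zero_add]
      have hvi := hv i hip
      constructor
      · show SignType.sign (A.val i (p + t • v)) = SignType.sign (A.val i (p + t₀ • v))
        apply sign_eq_of_mul_pos
        rw [h1, h2]
        rcases hvi.lt_or_gt with h | h
        · have : t * ⟪A.a i, v⟫ < 0 := mul_neg_of_pos_of_neg htp h
          have h' : t₀ * ⟪A.a i, v⟫ < 0 := mul_neg_of_pos_of_neg ht₀0 h
          exact mul_pos_of_neg_of_neg this h'
        · exact mul_pos (mul_pos htp h) (mul_pos ht₀0 h)
      · rw [h1]
        exact mul_ne_zero (ne_of_gt htp) hvi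
    · have h1 := hδ i hip _ (hmem t htp htt)
      have h2 := hδ i hip _ (hmem t₀ ht₀0 le_rfl)
      constructor
      · show SignType.sign (A.val i (p + t • v)) = SignType.sign (A.val i (p + t₀ • v))
        rw [sign_eq_of_mul_pos h1, sign_eq_of_mul_pos h2]
      · intro h
        rw [h, zero_mul] at h1
        exact lt_irrefl 0 h1
  set x : E := p + t₀ • v with hx
  have hxne : ∀ i, A.val i x ≠ 0 := fun i => (hsgn t₀ ht₀0 le_rfl i).2
  refine ⟨closure (A.openCell (A.signAt x)), ⟨x, hxne, rfl⟩, ?_, ?_⟩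
  · -- p is in the closure
    have hseq : ∀ k : ℕ, p + (t₀ / (k + 1)) • v ∈ A.openCell (A.signAt x) := by
      intro k
      have hk1 : (0:ℝ) < k + 1 := by positivity
      have htp : 0 < t₀ / (k + 1) := by positivity
      have htt : t₀ / (k + 1) ≤ t₀ := by
        rw [div_le_iff₀ hk1]
        nlinarith
      intro i
      exact (hsgn _ htp htt i).1
    have htend : Filter.Tendsto (fun k : ℕ => p + (t₀ / (k + 1)) • v) Filter.atTop (nhds p) := by
      have h1 : Filter.Tendsto (fun k : ℕ => t₀ / (k + 1)) Filter.atTop (nhds 0) := by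
        have h := tendsto_one_div_add_atTop_nhds_zero_nat.const_mul t₀
        simpa [mul_one_div, div_eq_mul_inv] using h
      have h2 : Filter.Tendsto (fun k : ℕ => p + (t₀ / (k + 1)) • v) Filter.atTop
          (nhds (p + (0:ℝ) • v)) :=
        (tendsto_const_nhds.add ((h1.smul_const v)))
      simpa using h2
    exact mem_closure_of_tendsto htend (Filter.Eventually.of_forall hseq)
  · -- halfspace property
    intro q hq i hip
    have hvi := hv i hip
    have hclosed : IsClosed {y : E | 0 ≤ (⟪A.a i, v⟫ : ℝ) * ⟪A.a i, y - p⟫} :=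
      isClosed_le continuous_const (continuous_const.mul
        (continuous_const.inner (continuous_id.sub continuous_const)))
    have hsub : A.openCell (A.signAt x) ⊆ {y : E | 0 ≤ (⟪A.a i, v⟫ : ℝ) * ⟪A.a i, y - p⟫} := by
      intro y hy
      have hsy : SignType.sign (A.val i y) = SignType.sign (A.val i x) := hy i
      have hyx : 0 < A.val i y * A.val i x := mul_pos_of_sign_eq (hxne i) hsy
      have hxv : A.val i x = t₀ * ⟪A.a i, v⟫ := by
        rw [hx, val_add_smul, hip, zero_add]
      have hyv : A.val i y = ⟪A.a i, y - p⟫ := by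
        rw [← val_sub, hip, sub_zero]
      rw [hxv, hyv] at hyx
      have : 0 < (⟪A.a i, v⟫ : ℝ) * ⟪A.a i, y - p⟫ := by nlinarith
      exact le_of_lt this
    exact closure_minimal hsub hclosed hq

/-- If `p` minimizes the distance from `x₀` over a chamber `C`, then `x₀ - p` lies in the
span of the normals of the hyperplanes through `p`. -/
lemma sub_mem_span_of_min (C : Set E) (hC : A.IsChamber C) (x₀ p : E) (hp : p ∈ C)
    (hmin : ∀ q ∈ C, dist x₀ p ≤ dist x₀ q) :
    x₀ - p ∈ Submodule.span ℝ (A.a '' {i | A.val i p = 0}) := by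
  obtain ⟨x, hx, rfl⟩ := hC
  set W : Submodule ℝ E := Submodule.span ℝ (A.a '' {i | A.val i p = 0}) with hW
  set u : E := x₀ - p with hu
  set u₁ : E := (W.orthogonalProjectionOnto u : E) with hu₁
  set u₂ : E := u - u₁ with hu₂
  have hu₂W : u₂ ∈ Wᗮ := by have := W.sub_starProjection_mem_orthogonal u; exact this
  by_cases h20 : u₂ = 0
  · have : u = u₁ := by
      rw [hu₂] at h20
      exact sub_eq_zero.mp h20
    rw [this]
    exact SetLike.coe_mem _
  · exfalso
    have hu₂a : ∀ i, A.val i p = 0 → (⟪A.a i, u₂⟫ : ℝ) = 0 := by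
      intro i hi
      exact (Submodule.mem_orthogonal W u₂).mp hu₂W (A.a i)
        (Submodule.subset_span (mem_image_of_mem _ hi))
    obtain ⟨δ, hδ0, hSfin, hδ⟩ := A.exists_delta p
    set t : ℝ := min 1 (δ / (2 * (‖u₂‖ + 1))) with htdef
    have hn2 : 0 < ‖u₂‖ := norm_pos_iff.mpr h20
    have ht0 : 0 < t := lt_min one_pos (by positivity)
    have ht1 : t ≤ 1 := min_le_left _ _
    have htδ : t * ‖u₂‖ < δ / 2 := by
      calc t * ‖u₂‖ ≤ (δ / (2 * (‖u₂‖ + 1))) * ‖u₂‖ :=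
            mul_le_mul_of_nonneg_right (min_le_right _ _) (norm_nonneg _)
        _ < (δ / (2 * (‖u₂‖ + 1))) * (‖u₂‖ + 1) := by
            apply mul_lt_mul_of_pos_left (by linarith) (by positivity)
        _ = δ / 2 := by field_simp
    have hT : ∀ y, y ∈ A.openCell (A.signAt x) → y ∈ ball p (δ/2) →
        y + t • u₂ ∈ A.openCell (A.signAt x) := by
      intro y hy hyb i
      by_cases hip : A.val i p = 0
      · have : A.val i (y + t • u₂) = A.val i y := by
          rw [val_add_smul, hu₂a i hip, mul_zero, add_zero]
        rw [this]
        exact hy i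
      · have hybδ : y ∈ ball p δ := mem_ball.mpr (lt_of_lt_of_le (mem_ball.mp hyb) (by linarith))
        have hyb2 : y + t • u₂ ∈ ball p δ := by
          rw [mem_ball]
          calc dist (y + t • u₂) p ≤ dist (y + t • u₂) y + dist y p := dist_triangle _ _ _
            _ < δ/2 + δ/2 := by
                apply add_lt_add_of_lt_of_lt _ (mem_ball.mp hyb)
                rw [dist_eq_norm]
                have : y + t • u₂ - y = t • u₂ := by abel
                rw [this, norm_smul, Real.norm_eq_abs, abs_of_pos ht0]
                exact htδ
            _ = δ := by ring
        have h1 := hδ i hip _ hyb2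
        have h2 := hδ i hip _ hybδ
        show SignType.sign (A.val i (y + t • u₂)) = A.signAt x i
        rw [sign_eq_of_mul_pos h1, ← sign_eq_of_mul_pos h2]
        exact hy i
    have hqC : p + t • u₂ ∈ closure (A.openCell (A.signAt x)) := by
      rw [Metric.mem_closure_iff]
      intro ε' hε'
      obtain ⟨y, hy, hyd⟩ := Metric.mem_closure_iff.mp hp (min ε' (δ/2)) (lt_min hε' (by linarith))
      refine ⟨y + t • u₂, hT y hy (mem_ball.mpr ?_), ?_⟩
      · calc dist y p = dist p y := dist_comm _ _
          _ < min ε' (δ/2) := hyd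
          _ ≤ δ/2 := min_le_right _ _
      · have : dist (p + t • u₂) (y + t • u₂) = dist p y := by
          simp [dist_eq_norm]
        rw [this]
        exact lt_of_lt_of_le hyd (min_le_left _ _)
    have hinner : (⟪u, u₂⟫ : ℝ) = ‖u₂‖ ^ 2 := by
      have hsplit : u = u₁ + u₂ := by rw [hu₂]; abel
      have h12 : (⟪u₁, u₂⟫ : ℝ) = 0 :=
        (Submodule.mem_orthogonal W u₂).mp hu₂W u₁ (SetLike.coe_mem _)
      rw [hsplit, inner_add_left, h12, zero_add, real_inner_self_eq_norm_sq]
    have hdistlt : dist x₀ (p + t • u₂) < dist x₀ p := by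
      have hxq : x₀ - (p + t • u₂) = u - t • u₂ := by rw [hu]; abel
      have hsq : ‖u - t • u₂‖ ^ 2 = ‖u‖ ^ 2 - (2 * t - t ^ 2) * ‖u₂‖ ^ 2 := by
        rw [norm_sub_sq_real, real_inner_smul_right, hinner, norm_smul,
          Real.norm_eq_abs, abs_of_pos ht0, mul_pow]
        ring
      have hlt : ‖u - t • u₂‖ ^ 2 < ‖u‖ ^ 2 := by
        rw [hsq]
        have h2t : 0 < 2 * t - t ^ 2 := by nlinarith
        nlinarith [pow_pos hn2 2]
      rw [dist_eq_norm, dist_eq_norm, hxq, ← hu]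
      nlinarith [norm_nonneg (u - t • u₂), norm_nonneg u]
    exact absurd (hmin _ hqC) (not_le.mpr hdistlt)

/-- Pythagoras along a flat. -/
lemma flat_pythagoras (s : Set ι) (p x₀ : E) (hp : ∀ i ∈ s, A.val i p = 0)
    (hu : x₀ - p ∈ Submodule.span ℝ (A.a '' s)) :
    ∀ q ∈ (⋂ i ∈ s, A.hyperplane i), dist x₀ q ^ 2 = dist x₀ p ^ 2 + dist p q ^ 2 := by
  intro q hq
  have hd : ∀ i ∈ s, (⟪A.a i, q - p⟫ : ℝ) = 0 := by
    intro i hi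
    have hqi : A.val i q = 0 := mem_iInter₂.mp hq i hi
    rw [← val_sub, hqi, hp i hi, sub_zero]
  have hqp : q - p ∈ (Submodule.span ℝ (A.a '' s))ᗮ := by
    rw [Submodule.mem_orthogonal]
    intro w hw
    induction hw using Submodule.span_induction with
    | mem z hz =>
        obtain ⟨i, hi, rfl⟩ := hz
        exact hd i hi
    | zero => exact inner_zero_left _
    | add w₁ w₂ _ _ h1 h2 => rw [inner_add_left, h1, h2, add_zero]
    | smul c w₁ _ h1 => rw [real_inner_smul_left, h1, mul_zero]
  have hcross : (⟪x₀ - p, q - p⟫ : ℝ) = 0 :=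
    (Submodule.mem_orthogonal _ (q - p)).mp hqp (x₀ - p) hu
  have hxq : x₀ - q = (x₀ - p) - (q - p) := by abel
  rw [dist_eq_norm, dist_eq_norm, dist_eq_norm, hxq, norm_sub_sq_real, hcross]
  rw [show p - q = -(q - p) by abel, norm_neg]
  ring

lemma le_infDist' (x₀ : E) {s : Set E} (hne : s.Nonempty) (d : ℝ)
    (h : ∀ q ∈ s, d ≤ dist x₀ q) : d ≤ infDist x₀ s := by
  by_contra hc
  push_neg at hc
  obtain ⟨y, hy, hyd⟩ := (infDist_lt_iff hne).mp hc
  exact absurd hyd (not_lt.mpr (h y hy))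

lemma val_add (i : ι) (x w : E) : A.val i (x + w) = A.val i x + ⟪A.a i, w⟫ := by
  simp only [val, inner_add_right]
  ring

lemma aux_nonneg {X m y : ℝ} (hX : X ≠ 0) (h1 : 0 ≤ m * X) (h2 : 0 ≤ X * y) : 0 ≤ m * y := by
  have hX2 : 0 < X ^ 2 := by positivity
  nlinarith [mul_nonneg h1 h2]

/-- For a flat `L`, there is a chamber `C` and a point `p ∈ C ∩ L` realizing the
distance to `L`, such that `p` also minimizes the distance over `C`. -/
lemma forward_key (x₀ : E) (L : Set E) (hLne : L.Nonempty) (s : Set ι)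
    (hLs : L = ⋂ i ∈ s, A.hyperplane i) :
    ∃ (C : Set E) (p : E), A.IsChamber C ∧ p ∈ C ∧ p ∈ L ∧
      infDist x₀ L = dist x₀ p ∧ (∀ q ∈ C, dist x₀ p ≤ dist x₀ q) ∧
      infDist x₀ C = dist x₀ p := by
  classical
  have hLclosed : IsClosed L := by
    rw [hLs]
    exact isClosed_biInter (fun i hi => isClosed_eq (A.val_continuous i) continuous_const)
  obtain ⟨p, hpL, hpd⟩ := hLclosed.exists_infDist_eq_dist hLne x₀
  have hpval : ∀ i ∈ s, A.val i p = 0 := by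
    intro i hi
    exact mem_iInter₂.mp (hLs ▸ hpL) i hi
  set u : E := x₀ - p with hu
  have hperp : ∀ q ∈ L, (⟪u, q - p⟫ : ℝ) = 0 := by
    intro q hq
    by_contra hr
    have hqp : q - p ≠ 0 := by
      intro h0
      rw [h0, inner_zero_right] at hr
      exact hr rfl
    have hd2 : 0 < ‖q - p‖ ^ 2 := pow_pos (norm_pos_iff.mpr hqp) 2
    set r : ℝ := ⟪u, q - p⟫ with hrdef
    set τ : ℝ := r / ‖q - p‖ ^ 2 with hτ
    set z : E := p + τ • (q - p) with hz
    have hzL : z ∈ L := by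
      rw [hLs]
      refine mem_iInter₂.mpr fun i hi => ?_
      show A.val i z = 0
      rw [hz, val_add_smul]
      have h1 : A.val i p = 0 := hpval i hi
      have h2 : (⟪A.a i, q - p⟫ : ℝ) = 0 := by
        have hqi : A.val i q = 0 := mem_iInter₂.mp (hLs ▸ hq) i hi
        rw [← val_sub, hqi, h1, sub_zero]
      rw [h1, h2, mul_zero, add_zero]
    have hzlt : dist x₀ z < dist x₀ p := by
      have hxz : x₀ - z = u - τ • (q - p) := by rw [hz, hu]; abel
      have hsq : ‖u - τ • (q - p)‖ ^ 2 = ‖u‖ ^ 2 - r ^ 2 / ‖q - p‖ ^ 2 := by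
        rw [norm_sub_sq_real, real_inner_smul_right, ← hrdef, norm_smul,
          Real.norm_eq_abs, mul_pow, sq_abs, hτ]
        field_simp
        ring
      have hrne : r ≠ 0 := hr
      have hlt : ‖x₀ - z‖ ^ 2 < ‖u‖ ^ 2 := by
        rw [hxz, hsq]
        have : 0 < r ^ 2 / ‖q - p‖ ^ 2 := by positivity
        linarith
      rw [dist_eq_norm, dist_eq_norm, ← hu]
      nlinarith [norm_nonneg (x₀ - z), norm_nonneg u]
    have hge : dist x₀ p ≤ dist x₀ z := by
      rw [← hpd]
      exact infDist_le_dist_of_mem hzL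
    exact absurd hge (not_le.mpr hzlt)
  have huspan : u ∈ Submodule.span ℝ (A.a '' s) := by
    set V : Submodule ℝ E := Submodule.span ℝ (A.a '' s) with hV
    have hmem : u ∈ Vᗮᗮ := by
      rw [Submodule.mem_orthogonal]
      intro w hw
      have hwa : ∀ i ∈ s, (⟪A.a i, w⟫ : ℝ) = 0 := fun i hi =>
        (Submodule.mem_orthogonal V w).mp hw (A.a i)
          (Submodule.subset_span (mem_image_of_mem _ hi))
      have hpwL : p + w ∈ L := by
        rw [hLs]
        refine mem_iInter₂.mpr fun i hi => ?_
        show A.val i (p + w) = 0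
        rw [val_add, hpval i hi, hwa i hi, add_zero]
      have := hperp (p + w) hpwL
      have hww : p + w - p = w := by abel
      rw [hww] at this
      rw [real_inner_comm]
      exact this
    rwa [Submodule.orthogonal_orthogonal] at hmem
  obtain ⟨δ, hδ0, hSfin, hδ⟩ := A.exists_delta p
  haveI : Fintype ↥{i | A.val i p = 0} := hSfin.fintype
  set a' : ↥{i | A.val i p = 0} → E := fun i => A.a i.1 with ha'
  have hsSp : A.a '' s ⊆ A.a '' {i | A.val i p = 0} :=
    Set.image_mono (fun i hi => hpval i hi)
  have hwmem : (p - x₀ : E) ∈ Submodule.span ℝ (Set.range a') := by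
    have h1 : Set.range a' = A.a '' {i | A.val i p = 0} := (image_eq_range _ _).symm
    rw [h1]
    have h2 : u ∈ Submodule.span ℝ (A.a '' {i | A.val i p = 0}) :=
      Submodule.span_mono hsSp huspan
    have h3 : p - x₀ = -u := by rw [hu]; abel
    rw [h3]
    exact neg_mem h2
  obtain ⟨v, μ, hv1, hv2, hv3⟩ := exists_signed_rep a' (fun i => A.ha _) (p - x₀) hwmem
  obtain ⟨C, hCch, hpC, hChalf⟩ := A.exists_chamber p v (fun i hi => hv1 ⟨i, hi⟩)
  have hminC : ∀ q ∈ C, dist x₀ p ≤ dist x₀ q := by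
    intro q hq
    have hkey : (0:ℝ) ≤ ⟪p - x₀, q - p⟫ := by
      rw [hv3, sum_inner]
      refine Finset.sum_nonneg fun i _ => ?_
      rw [real_inner_smul_left]
      exact aux_nonneg (hv1 i) (hv2 i) (hChalf q hq i.1 i.2)
    have hneg : (⟪u, q - p⟫ : ℝ) ≤ 0 := by
      have : (⟪p - x₀, q - p⟫ : ℝ) = -⟪u, q - p⟫ := by
        rw [hu, show p - x₀ = -(x₀ - p) by abel, inner_neg_left]
      linarith [hkey, this ▸ hkey]
    have hxq : x₀ - q = u - (q - p) := by rw [hu]; abel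
    have hsq : ‖x₀ - q‖ ^ 2 = ‖u‖ ^ 2 - 2 * ⟪u, q - p⟫ + ‖q - p‖ ^ 2 := by
      rw [hxq, norm_sub_sq_real]
    have : ‖u‖ ^ 2 ≤ ‖x₀ - q‖ ^ 2 := by
      rw [hsq]
      nlinarith [sq_nonneg ‖q - p‖]
    rw [dist_eq_norm, dist_eq_norm, ← hu]
    nlinarith [norm_nonneg (x₀ - q), norm_nonneg u]
  have hdC : infDist x₀ C = dist x₀ p :=
    le_antisymm (infDist_le_dist_of_mem hpC) (le_infDist' x₀ ⟨p, hpC⟩ _ hminC)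
  exact ⟨C, p, hCch, hpC, hpL, hpd, hminC, hdC⟩

theorem stmt15' (x₀ : E) :
    A.IsGeneric x₀ ↔
      ∀ L L', A.IsFlat L → A.IsFlat L' → L ≠ L' → infDist x₀ L ≠ infDist x₀ L' := by
  constructor
  · -- forward direction
    intro hG L L' hL hL' hne heq
    obtain ⟨hLne, s, hLs⟩ := hL
    obtain ⟨hL'ne, s', hL's⟩ := hL'
    by_cases hsub : L ⊆ L'
    · have hss : L ⊂ L' := ssubset_of_subset_of_ne hsub hne
      have := hG.2 L' L ⟨hL'ne, s', hL's⟩ ⟨hLne, s, hLs⟩ hss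
      linarith [heq ▸ this]
    by_cases hsub' : L' ⊆ L
    · have hss : L' ⊂ L := ssubset_of_subset_of_ne hsub' (Ne.symm hne)
      have := hG.2 L L' ⟨hLne, s, hLs⟩ ⟨hL'ne, s', hL's⟩ hss
      linarith [heq ▸ this]
    obtain ⟨C, p, hCch, hpC, hpL, hpd, hminC, hdC⟩ := A.forward_key x₀ L hLne s hLs
    obtain ⟨C', p', hC'ch, hp'C', hp'L', hp'd, hminC', hdC'⟩ := A.forward_key x₀ L' hL'ne s' hL's
    have hCC' : infDist x₀ C = infDist x₀ C' := by
      rw [hdC, hdC', ← hpd, ← hp'd, heq]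
    obtain ⟨hpp', -⟩ := hG.1 C C' hCch hC'ch hCC' p hpC p' hp'C' hminC hminC'
    set M : Set E := L ∩ L' with hM
    have hpM : p ∈ M := ⟨hpL, by rw [hpp']; exact hp'L'⟩
    have hMflat : A.IsFlat M := by
      refine ⟨⟨p, hpM⟩, s ∪ s', ?_⟩
      rw [hM, hLs, hL's, biInter_union]
    have hMss : M ⊂ L := by
      refine ssubset_of_subset_of_ne inter_subset_left (fun hML => hsub ?_)
      intro x hx
      rw [← hML] at hx
      exact hx.2
    have hlt := hG.2 L M ⟨hLne, s, hLs⟩ hMflat hMss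
    have hMle : infDist x₀ M ≤ dist x₀ p := infDist_le_dist_of_mem hpM
    rw [hpd] at hlt
    linarith
  · -- backward direction
    intro h
    constructor
    · rintro C C' hC hC' hdisteq p hp p' hp' hmin hmin'
      have hspan := A.sub_mem_span_of_min C hC x₀ p hp hmin
      have hspan' := A.sub_mem_span_of_min C' hC' x₀ p' hp' hmin'
      set X : Set E := ⋂ i ∈ {i | A.val i p = 0}, A.hyperplane i with hX
      set X' : Set E := ⋂ i ∈ {i | A.val i p' = 0}, A.hyperplane i with hX'
      have hpX : p ∈ X := mem_iInter₂.mpr (fun i hi => hi)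
      have hp'X' : p' ∈ X' := mem_iInter₂.mpr (fun i hi => hi)
      have hXflat : A.IsFlat X := ⟨⟨p, hpX⟩, _, rfl⟩
      have hX'flat : A.IsFlat X' := ⟨⟨p', hp'X'⟩, _, rfl⟩
      have hpyth := A.flat_pythagoras _ p x₀ (fun i hi => hi) hspan
      have hpyth' := A.flat_pythagoras _ p' x₀ (fun i hi => hi) hspan'
      have hdX : infDist x₀ X = dist x₀ p := by
        refine le_antisymm (infDist_le_dist_of_mem hpX) (le_infDist' x₀ ⟨p, hpX⟩ _ ?_)
        intro q hq
        nlinarith [hpyth q hq, dist_nonneg (x := x₀) (y := q), dist_nonneg (x := x₀) (y := p),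
          sq_nonneg (dist p q)]
      have hdX' : infDist x₀ X' = dist x₀ p' := by
        refine le_antisymm (infDist_le_dist_of_mem hp'X') (le_infDist' x₀ ⟨p', hp'X'⟩ _ ?_)
        intro q hq
        nlinarith [hpyth' q hq, dist_nonneg (x := x₀) (y := q), dist_nonneg (x := x₀) (y := p'),
          sq_nonneg (dist p' q)]
      have hdC : infDist x₀ C = dist x₀ p :=
        le_antisymm (infDist_le_dist_of_mem hp) (le_infDist' x₀ ⟨p, hp⟩ _ hmin)
      have hdC' : infDist x₀ C' = dist x₀ p' :=
        le_antisymm (infDist_le_dist_of_mem hp') (le_infDist' x₀ ⟨p', hp'⟩ _ hmin')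
      have hdeq : infDist x₀ X = infDist x₀ X' := by
        rw [hdX, hdX', ← hdC, ← hdC', hdisteq]
      have hXX' : X = X' := by
        by_contra hneX
        exact h X X' hXflat hX'flat hneX hdeq
      have hp'X : p' ∈ X := by rw [hXX']; exact hp'X'
      have hkey := hpyth p' hp'X
      have hdd : dist x₀ p' = dist x₀ p := by
        rw [← hdX, ← hdX', hdeq]
      rw [hdd] at hkey
      have hpp' : dist p p' = 0 := by nlinarith [dist_nonneg (x := p) (y := p')]
      have hpeq : p = p' := by
        rwa [dist_eq_zero] at hpp'
      exact ⟨hpeq, hp, by rw [hpeq]; exact hp'⟩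
    · intro L L' hL hL' hss
      have hle : infDist x₀ L ≤ infDist x₀ L' :=
        infDist_le_infDist_of_subset hss.subset hL'.1
      exact lt_of_le_of_ne hle (h L L' hL hL' (Ne.symm hss.ne))

end Arrangement


/-- A point is generic iff any two distinct flats have different distances from it. -/
theorem stmt15 {n : ℕ} {ι : Type} (A : Arrangement n ι) (x₀ : EuclideanSpace ℝ (Fin n)) :
    A.IsGeneric x₀ ↔
      ∀ L L', A.IsFlat L → A.IsFlat L' → L ≠ L' → infDist x₀ L ≠ infDist x₀ L' := A.stmt15' x₀
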